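/- Under the hypotheses of the enlarged 2-CH system (spectral equations in x and t plus the pseudo-potential equations for p), the function s = ελf²/(1 - εp) satisfies the second-order equation s_xx = s_x²/(2s) - λ²[(m - 2λσρ²)s²]_x - (λ⁴/2)(m - 2λσρ²)²s³ + 2(1/4 - λm + λ²σρ²)s, wherever s ≠ 0. -/

import Mathlib

set_option maxHeartbeats 2000000 in
theorem stmt_16 (f g p m ρ s : ℝ → ℝ) (l sg ε : ℝ)
    (hmdiff : Differentiable ℝ m) (hρdiff : Differentiable ℝ ρ)
    (hf : ∀ x, HasDerivAt f (g x) x)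
    (hg : ∀ x, HasDerivAt g ((1/4 - l * m x + l^2 * sg * (ρ x)^2) * f x) x)
    (hp : ∀ x, HasDerivAt p (-l^3 * (m x - 2*l*sg*(ρ x)^2) * (f x)^2) x)
    (hs : s = fun x => ε * l * (f x)^2 / (1 - ε * p x))
    (hden : ∀ x, 1 - ε * p x ≠ 0) (hfne : ∀ x, f x ≠ 0) :
    ∀ x : ℝ, s x ≠ 0 →
      deriv (deriv s) x
        = (deriv s x)^2 / (2 * s x)
          - l^2 * deriv (fun y => (m y - 2*l*sg*(ρ y)^2) * (s y)^2) x
          - l^4/2 * (m x - 2*l*sg*(ρ x)^2)^2 * (s x)^3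
          + 2 * (1/4 - l * m x + l^2 * sg * (ρ x)^2) * s x := by
  have hm' : ∀ y, HasDerivAt m (deriv m y) y := fun y => (hmdiff y).hasDerivAt
  have hr' : ∀ y, HasDerivAt ρ (deriv ρ y) y := fun y => (hρdiff y).hasDerivAt
  have hM : ∀ y, HasDerivAt (fun z => m z - 2*l*sg*(ρ z)^2)
      (deriv m y - 4*l*sg*(ρ y * deriv ρ y)) y := by
    intro y
    have h2 : HasDerivAt (fun z => (ρ z)^2) (2 * ρ y * deriv ρ y) y := by
      simpa using (hr' y).fun_pow 2
    have h3 := (hm' y).fun_sub (h2.const_mul (2*l*sg))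
    refine h3.congr_deriv ?_
    ring
  have hfsq : ∀ y, HasDerivAt (fun z => (f z)^2) (2 * f y * g y) y := by
    intro y
    simpa using (hf y).fun_pow 2
  have hN : ∀ y, HasDerivAt (fun z => ε*l*(f z)^2) (ε*l*(2 * f y * g y)) y := by
    intro y
    exact (hfsq y).const_mul (ε*l)
  have hD : ∀ y, HasDerivAt (fun z => 1 - ε * p z)
      (ε*l^3*((m y - 2*l*sg*(ρ y)^2)*(f y)^2)) y := by
    intro y
    have h4 := ((hp y).const_mul ε).const_sub 1
    refine h4.congr_deriv ?_
    ring
  have hS : ∀ y, HasDerivAt s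
      ((ε*l*(2 * f y * g y) * (1 - ε * p y)
        - ε*l*(f y)^2 * (ε*l^3*((m y - 2*l*sg*(ρ y)^2)*(f y)^2))) / (1 - ε * p y)^2) y := by
    intro y
    rw [hs]
    exact (hN y).fun_div (hD y) (hden y)
  have hds : deriv s = fun y =>
      (ε*l*(2 * f y * g y) * (1 - ε * p y)
        - ε*l*(f y)^2 * (ε*l^3*((m y - 2*l*sg*(ρ y)^2)*(f y)^2))) / (1 - ε * p y)^2 :=
    funext fun y => (hS y).deriv
  intro x hsx0
  have hsx : s x = ε * l * (f x)^2 / (1 - ε * p x) := by rw [hs]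
  -- nonvanishing facts
  rw [hsx] at hsx0
  have hnum : ε * l * (f x)^2 ≠ 0 := (div_ne_zero_iff.mp hsx0).1
  have hεl : ε * l ≠ 0 := fun h => hnum (by rw [h]; ring)
  have hε : ε ≠ 0 := fun h => hεl (by rw [h]; ring)
  have hl : l ≠ 0 := fun h => hεl (by rw [h]; ring)
  -- second derivative
  have hfg : HasDerivAt (fun z => 2 * f z * g z)
      (2 * g x * g x + 2 * f x * ((1/4 - l * m x + l^2 * sg * (ρ x)^2) * f x)) x :=
    ((hf x).const_mul 2).fun_mul (hg x)
  have hNg : HasDerivAt (fun z => ε*l*(2 * f z * g z))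
      (ε*l*(2 * g x * g x + 2 * f x * ((1/4 - l * m x + l^2 * sg * (ρ x)^2) * f x))) x :=
    hfg.const_mul (ε*l)
  have part1 := hNg.fun_mul (hD x)
  have inner := ((hM x).fun_mul (hfsq x)).const_mul (ε*l^3)
  have part2 := (hN x).fun_mul inner
  have hA := part1.fun_sub part2
  have hB := (hD x).fun_pow 2
  have hkey := (hA.fun_div hB (pow_ne_zero 2 (hden x))).deriv
  rw [hds]
  beta_reduce
  have hkey2 : deriv (fun y =>
      (ε*l*(2 * f y * g y) * (1 - ε * p y)
        - ε*l*(f y)^2 * (ε*l^3*((m y - 2*l*sg*(ρ y)^2)*(f y)^2))) / (1 - ε * p y)^2) x = _ := hkey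
  rw [hkey2]
  have hRd : deriv (fun y => (m y - 2*l*sg*(ρ y)^2) * (s y)^2) x = _ :=
    ((hM x).fun_mul ((hS x).fun_pow 2)).deriv
  rw [hRd, hsx]
  have hDx := hden x
  have hfx := hfne x
  norm_num only
  field_simp
  ring
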